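/- Let A₂₂ be an operator on a Hilbert space H⁻ such that −A₂₂ generates a bounded holomorphic semigroup (so ‖(A₂₂ − μ)⁻¹‖ ≤ C/|μ| for Re μ < 0, |μ| ≥ δ), and let G(μ₀) = A₁₂(A₂₂ − μ₀)⁻¹ be compact for some μ₀ with Re μ₀ < 0. Then G(μ) = G(μ₀)(A₂₂ − μ₀)(A₂₂ − μ)⁻¹ is well defined for all μ with Re μ < 0, and ‖G(μ)‖ → 0 as |μ| → ∞ uniformly in the half-plane Re μ < 0. -/

import Mathlib

open ContinuousLinearMap Metric

variable {Hp Hm : Type*}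
  [NormedAddCommGroup Hp] [InnerProductSpace ℂ Hp] [CompleteSpace Hp]
  [NormedAddCommGroup Hm] [InnerProductSpace ℂ Hm] [CompleteSpace Hm]

set_option maxHeartbeats 1000000 in
/-- Suppose `−A₂₂` generates a bounded holomorphic semigroup, encoded by a resolvent
family `R μ = (A₂₂ − μ)⁻¹` defined for `Re μ < 0` with `‖R μ‖ ≤ C/|μ|` for `|μ| ≥ δ`,
and let `G₀ = A₁₂(A₂₂ − μ₀)⁻¹` be compact for some `μ₀` with `Re μ₀ < 0`.  Then
`G(μ) = G₀ (A₂₂ − μ₀)(A₂₂ − μ)⁻¹ = G₀ + (μ − μ₀) G₀ (A₂₂ − μ)⁻¹` is defined for all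
`Re μ < 0` and `‖G(μ)‖ → 0` as `|μ| → ∞` uniformly in the left half-plane. -/
theorem stmt7 (A22 : Hm →ₗ.[ℂ] Hm) (hdense : Dense (A22.domain : Set Hm))
    (R : ℂ → (Hm →L[ℂ] Hm))
    (hRmem : ∀ μ : ℂ, μ.re < 0 → ∀ y : Hm, R μ y ∈ A22.domain)
    (hRright : ∀ (μ : ℂ) (h : μ.re < 0) (y : Hm),
      A22 ⟨R μ y, hRmem μ h y⟩ - μ • R μ y = y)
    (hRleft : ∀ μ : ℂ, μ.re < 0 → ∀ x : A22.domain,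
      R μ (A22 x - μ • (x : Hm)) = (x : Hm))
    (C δ : ℝ) (hδ : 0 < δ)
    (hRbound : ∀ μ : ℂ, μ.re < 0 → δ ≤ ‖μ‖ → ‖R μ‖ ≤ C / ‖μ‖)
    (μ0 : ℂ) (hμ0 : μ0.re < 0)
    (G0 : Hm →L[ℂ] Hp) (hG0 : IsCompactOperator G0) :
    ∀ ε > (0:ℝ), ∃ r : ℝ, ∀ μ : ℂ, μ.re < 0 → r < ‖μ‖ →
      ‖G0 + (μ - μ0) • (G0.comp (R μ))‖ < ε := by
  classical
  intro ε hε
  -- `C` is nonnegative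
  have hC : 0 ≤ C := by
    set d : ℝ := max δ 1 with hd
    have hd1 : 0 < d := lt_of_lt_of_le one_pos (le_max_right _ _)
    have hre : ((-d : ℝ) : ℂ).re < 0 := by simpa using hd1
    have hnorm : ‖((-d : ℝ) : ℂ)‖ = d := by
      rw [Complex.norm_real]
      simp [abs_of_pos hd1]
    have h := hRbound _ hre (by rw [hnorm]; exact le_max_left _ _)
    rw [hnorm] at h
    have h0 : (0:ℝ) ≤ C / d := le_trans (norm_nonneg _) h
    calc (0:ℝ) ≤ (C / d) * d := mul_nonneg h0 hd1.le
      _ = C := div_mul_cancel₀ C hd1.ne'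
  set M : ℝ := 1 + 2 * C with hM
  have hM1 : (1:ℝ) ≤ M := by nlinarith
  have hM0 : (0:ℝ) < M := by linarith
  set δ₁ : ℝ := max δ (max ‖μ0‖ 1) with hδ₁
  have hδ₁1 : (1:ℝ) ≤ δ₁ := le_trans (le_max_right _ _) (le_max_right _ _)
  -- the operator `T μ = I + (μ - μ0) R μ`
  set T : ℂ → (Hm →L[ℂ] Hm) := fun μ =>
    ContinuousLinearMap.id ℂ Hm + (μ - μ0) • R μ with hT
  have hTapp : ∀ μ (y : Hm), T μ y = y + (μ - μ0) • R μ y := by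
    intro μ y; simp [hT]
  -- `G(μ) = G0 ∘ T μ`
  have hGT : ∀ μ : ℂ, G0 + (μ - μ0) • (G0.comp (R μ)) = G0.comp (T μ) := by
    intro μ
    ext y
    simp [hTapp, map_add, map_smul]
  -- uniform bound on `T μ`
  have hTnorm : ∀ μ : ℂ, μ.re < 0 → δ₁ ≤ ‖μ‖ → ‖T μ‖ ≤ M := by
    intro μ hμre hμn
    have hμpos : (0:ℝ) < ‖μ‖ := lt_of_lt_of_le (lt_of_lt_of_le one_pos hδ₁1) hμn
    have hμ0n : ‖μ0‖ ≤ ‖μ‖ :=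
      le_trans (le_trans (le_max_left _ _) (le_max_right δ _)) hμn
    have hR := hRbound μ hμre (le_trans (le_max_left _ _) hμn)
    have h1 : ‖(μ - μ0) • R μ‖ ≤ 2 * C := by
      rw [norm_smul]
      have h2 : ‖μ - μ0‖ ≤ 2 * ‖μ‖ := by
        have := norm_sub_le μ μ0; linarith
      have h3 : ‖μ - μ0‖ * ‖R μ‖ ≤ (2 * ‖μ‖) * (C / ‖μ‖) :=
        mul_le_mul h2 hR (norm_nonneg _) (by positivity)
      have hcc : C / ‖μ‖ * ‖μ‖ = C := div_mul_cancel₀ C hμpos.ne'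
      nlinarith
    calc ‖T μ‖ ≤ ‖ContinuousLinearMap.id ℂ Hm‖ + ‖(μ - μ0) • R μ‖ := norm_add_le _ _
      _ ≤ 1 + 2 * C := add_le_add norm_id_le h1
      _ = M := hM.symm
  -- resolvent identity : `R μ0 ∘ T μ = R μ`
  have hRes : ∀ μ : ℂ, μ.re < 0 → (R μ0).comp (T μ) = R μ := by
    intro μ hμre
    ext y
    set x : A22.domain := ⟨R μ y, hRmem μ hμre y⟩ with hx
    have h1 := hRright μ hμre y
    have h2 : A22 x = y + μ • R μ y := by
      rw [sub_eq_iff_eq_add] at h1; exact h1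
    have e1 : A22 x - μ0 • (x : Hm) = y + (μ - μ0) • R μ y := by
      rw [h2]
      show y + μ • R μ y - μ0 • R μ y = y + (μ - μ0) • R μ y
      rw [sub_smul]; abel
    have e2 : R μ0 (T μ y) = (x : Hm) := by
      rw [hTapp, ← e1]; exact hRleft μ0 hμ0 x
    simpa using e2
  -- key adjoint identity
  have hAdjT : ∀ μ : ℂ, μ.re < 0 →
      ∀ z : Hm, adjoint (T μ) (adjoint (R μ0) z) = adjoint (R μ) z := by
    intro μ hμre z
    have h := hRes μ hμre
    have h2 := congrArg adjoint h
    rw [adjoint_comp] at h2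
    have := congrFun (congrArg (fun (f : Hm →L[ℂ] Hm) => (f : Hm → Hm)) h2) z
    simpa using this
  -- density of the range of `(R μ0)†`
  have hdr : DenseRange (adjoint (R μ0)) := by
    have horth : (LinearMap.range (adjoint (R μ0) : Hm →ₗ[ℂ] Hm))ᗮ = ⊥ := by
      rw [Submodule.eq_bot_iff]
      intro ψ hψ
      have hz : ∀ z : Hm, (inner ℂ (adjoint (R μ0) z) ψ : ℂ) = 0 := by
        intro z
        exact hψ _ ⟨z, rfl⟩
      have h0 : R μ0 ψ = 0 := by
        have h3 : (inner ℂ (R μ0 ψ) (R μ0 ψ) : ℂ) = 0 := by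
          rw [← adjoint_inner_left]; exact hz (R μ0 ψ)
        exact inner_self_eq_zero.mp h3
      have h1 := hRright μ0 hμ0 ψ
      have hx0 : (⟨R μ0 ψ, hRmem μ0 hμ0 ψ⟩ : A22.domain) = 0 := Subtype.ext (by simpa using h0)
      rw [hx0, h0] at h1
      simpa using h1.symm
    have htop : (LinearMap.range (adjoint (R μ0) : Hm →ₗ[ℂ] Hm)).topologicalClosure = ⊤ :=
      Submodule.topologicalClosure_eq_top_iff.mpr horth
    have hd2 : Dense ((LinearMap.range (adjoint (R μ0) : Hm →ₗ[ℂ] Hm) : Submodule ℂ Hm) :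
        Set Hm) := Submodule.dense_iff_topologicalClosure_eq_top.mpr htop
    simpa [DenseRange, LinearMap.coe_range, ContinuousLinearMap.coe_coe] using hd2
  -- the compact set
  have hBcomp : IsCompactOperator ((adjoint G0).comp G0 : Hm →L[ℂ] Hm) :=
    hG0.continuous_comp (adjoint G0).continuous
  set K : Set Hm := closure (((adjoint G0).comp G0) '' closedBall 0 M) with hK
  have hKcomp : IsCompact K := by
    exact
      hBcomp.isCompact_closure_image_closedBall (𝕜₁ := ℂ) M
  set ε' : ℝ := ε ^ 2 / 4 with hε'
  have hε'pos : 0 < ε' := by positivity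
  set ρ : ℝ := ε' / (2 * M) with hρ
  have hρpos : 0 < ρ := by positivity
  -- finite subcover by balls around points of the dense range
  have hcover : K ⊆ ⋃ z : Hm, ball (adjoint (R μ0) z) ρ := by
    intro ψ _
    obtain ⟨z, hz⟩ := hdr.exists_dist_lt ψ hρpos
    exact Set.mem_iUnion.mpr ⟨z, mem_ball.mpr hz⟩
  obtain ⟨t, ht⟩ := hKcomp.elim_finite_subcover
    (fun z : Hm => ball (adjoint (R μ0) z) ρ) (fun z => isOpen_ball) hcover
  obtain ⟨b, hb⟩ := ((t.finite_toSet).image (fun z => ‖z‖)).bddAbove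
  refine ⟨max δ₁ (2 * (C * b + 1) / ε'), ?_⟩
  intro μ hμre hμr
  have hδ₁μ : δ₁ ≤ ‖μ‖ := le_of_lt (lt_of_le_of_lt (le_max_left _ _) hμr)
  have hμpos : (0:ℝ) < ‖μ‖ := lt_of_lt_of_le (lt_of_lt_of_le one_pos hδ₁1) hδ₁μ
  have hμbig : 2 * (C * b + 1) / ε' < ‖μ‖ := lt_of_le_of_lt (le_max_right _ _) hμr
  have hTn := hTnorm μ hμre hδ₁μ
  have hRn := hRbound μ hμre (le_trans (le_max_left _ _) hδ₁μ)
  -- uniform smallness of `(T μ)†` on `K`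
  have hkey : ∀ ψ ∈ K, ‖adjoint (T μ) ψ‖ ≤ ε' := by
    intro ψ hψ
    obtain ⟨z, hzt, hzball⟩ := Set.mem_iUnion₂.mp (ht hψ)
    have hzb : ‖z‖ ≤ b := hb ⟨z, hzt, rfl⟩
    have hdist : ‖ψ - adjoint (R μ0) z‖ < ρ := by
      have := mem_ball.mp hzball
      rwa [dist_eq_norm] at this
    have hadjTn : ‖adjoint (T μ)‖ ≤ M := by
      rw [LinearIsometryEquiv.norm_map ContinuousLinearMap.adjoint (T μ)]
      exact hTn
    have h1 : ‖adjoint (T μ) (ψ - adjoint (R μ0) z)‖ ≤ ε' / 2 := by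
      calc ‖adjoint (T μ) (ψ - adjoint (R μ0) z)‖
          ≤ ‖adjoint (T μ)‖ * ‖ψ - adjoint (R μ0) z‖ := le_opNorm _ _
        _ ≤ M * ρ := mul_le_mul hadjTn (le_of_lt hdist) (norm_nonneg _) (le_of_lt hM0)
        _ = ε' / 2 := by rw [hρ]; field_simp
    have h2 : ‖adjoint (T μ) (adjoint (R μ0) z)‖ ≤ ε' / 2 := by
      rw [hAdjT μ hμre z]
      have hadjR : ‖adjoint (R μ)‖ ≤ C / ‖μ‖ := by
        rw [LinearIsometryEquiv.norm_map ContinuousLinearMap.adjoint (R μ)]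
        exact hRn
      calc ‖adjoint (R μ) z‖ ≤ ‖adjoint (R μ)‖ * ‖z‖ := le_opNorm _ _
        _ ≤ (C / ‖μ‖) * b := mul_le_mul hadjR hzb (norm_nonneg _) (by positivity)
        _ ≤ (C * b + 1) / ‖μ‖ := by
            rw [div_mul_eq_mul_div, div_le_div_iff₀ hμpos hμpos]
            nlinarith
        _ ≤ ε' / 2 := by
            rw [div_le_iff₀ hμpos]
            rw [div_lt_iff₀ hε'pos] at hμbig
            nlinarith [norm_nonneg z]
    calc ‖adjoint (T μ) ψ‖
        = ‖adjoint (T μ) (ψ - adjoint (R μ0) z) + adjoint (T μ) (adjoint (R μ0) z)‖ := by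
          rw [← map_add, sub_add_cancel]
      _ ≤ ‖adjoint (T μ) (ψ - adjoint (R μ0) z)‖ + ‖adjoint (T μ) (adjoint (R μ0) z)‖ :=
          norm_add_le _ _
      _ ≤ ε' / 2 + ε' / 2 := add_le_add h1 h2
      _ = ε' := by ring
  -- bound on unit vectors
  have hunit : ∀ y : Hm, ‖y‖ ≤ 1 → ‖(G0.comp (T μ)) y‖ ≤ ε / 2 := by
    intro y hy
    have hvM : ‖T μ y‖ ≤ M := by
      calc ‖T μ y‖ ≤ ‖T μ‖ * ‖y‖ := le_opNorm _ _
        _ ≤ M * 1 := mul_le_mul hTn hy (norm_nonneg _) (le_of_lt hM0)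
        _ = M := mul_one _
    have hψK : adjoint G0 (G0 (T μ y)) ∈ K :=
      subset_closure ⟨T μ y, mem_closedBall_zero_iff.mpr hvM, rfl⟩
    have hinner : ((‖G0 (T μ y)‖ : ℂ)) ^ 2
        = inner ℂ y (adjoint (T μ) (adjoint G0 (G0 (T μ y)))) := by
      rw [adjoint_inner_right, adjoint_inner_right, inner_self_eq_norm_sq_to_K]; norm_cast
    have hsq : ‖G0 (T μ y)‖ ^ 2 ≤ ε' := by
      have h1 : ‖G0 (T μ y)‖ ^ 2 = ‖((‖G0 (T μ y)‖ : ℂ)) ^ 2‖ := by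
        rw [norm_pow, Complex.norm_real, norm_norm]
      rw [h1, hinner]
      calc ‖(inner ℂ y (adjoint (T μ) (adjoint G0 (G0 (T μ y)))) : ℂ)‖
          ≤ ‖y‖ * ‖adjoint (T μ) (adjoint G0 (G0 (T μ y)))‖ := norm_inner_le_norm _ _
        _ ≤ 1 * ε' := mul_le_mul hy (hkey _ hψK) (norm_nonneg _) one_pos.le
        _ = ε' := one_mul _
    have hfin : ‖G0 (T μ y)‖ ≤ ε / 2 := by
      rw [hε'] at hsq
      nlinarith [norm_nonneg (G0 (T μ y)), hε]
    calc ‖(G0.comp (T μ)) y‖ = ‖G0 (T μ y)‖ := by rw [comp_apply]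
      _ ≤ ε / 2 := hfin
  -- conclude
  rw [hGT μ]
  have hop : ‖G0.comp (T μ)‖ ≤ ε / 2 := by
    refine opNorm_le_bound _ (by linarith) ?_
    intro y
    rcases eq_or_ne y 0 with rfl | hy0
    · simp
    · have hyn : (0:ℝ) < ‖y‖ := norm_pos_iff.mpr hy0
      set u : Hm := ((‖y‖ : ℂ))⁻¹ • y with hu
      have hun : ‖u‖ = 1 := by
        rw [hu, norm_smul]
        simp [norm_inv, Complex.norm_real, abs_of_pos hyn]
        field_simp
      have hyu : y = ((‖y‖ : ℂ)) • u := by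
        rw [hu, smul_smul]
        rw [mul_inv_cancel₀ (by exact_mod_cast hyn.ne')]
        simp
      calc ‖(G0.comp (T μ)) y‖ = ‖((‖y‖ : ℂ)) • (G0.comp (T μ)) u‖ := by
            rw [← map_smul, ← hyu]
        _ = ‖y‖ * ‖(G0.comp (T μ)) u‖ := by
            rw [norm_smul, Complex.norm_real, norm_norm]
        _ ≤ ‖y‖ * (ε / 2) := by
            exact mul_le_mul_of_nonneg_left (hunit u (le_of_eq hun)) (le_of_lt hyn)
        _ = ε / 2 * ‖y‖ := mul_comm _ _
  linarith
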